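/- Let (N,h) be an embedding up to homotopy of f : K → M with complement C ⊆ M (the closure of M − N), where M is a closed PL manifold. Then the complement of the j-fold decompression (N × D^j_{1/2} ⊆ M × D^j) deformation retracts onto a subspace homeomorphic to the j-fold fiberwise suspension Σ^j_M C = (C × D^j) ∪_{C × S^{j-1}} (M × S^{j-1}); in particular, (M × D^j) − int(N × D^j_{1/2}) is homotopy equivalent to Σ^j_M C. -/

import Mathlib

open Topology Topology.Homotopy unitInterval Metric

noncomputable section

variable {X Y Z : Type*} [TopologicalSpace X] [TopologicalSpace Y] [TopologicalSpace Z]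

/-- The map on generalized loops induced by a continuous map. -/
def GenLoop.map {N : Type*} (f : C(X, Y)) {x : X} (p : Ω^ N X x) : Ω^ N Y (f x) :=
  ⟨f.comp p.1, fun y hy => by simp [p.2 y hy]⟩

/-- The induced map on homotopy groups. -/
def HomotopyGroup.piMap (f : C(X, Y)) (n : ℕ) (x : X) :
    HomotopyGroup.Pi n X x → HomotopyGroup.Pi n Y (f x) :=
  Quotient.map (GenLoop.map f)
    (fun _ _ h => Nonempty.map (fun F => F.compContinuousMap f) h)

/-- A continuous map is a weak homotopy equivalence if it induces bijections on
all homotopy groups (including `π₀`) at all basepoints. -/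
def IsWeakHomotopyEquiv (f : C(X, Y)) : Prop :=
  ∀ (n : ℕ) (x : X), Function.Bijective (HomotopyGroup.piMap f n x)

/-- The inclusion of the unit sphere in the unit disk of Euclidean space. -/
def sphereToDisk {j : ℕ} (s : (sphere (0 : EuclideanSpace ℝ (Fin j)) 1 : Set _)) :
    (closedBall (0 : EuclideanSpace ℝ (Fin j)) 1 : Set _) :=
  ⟨s.1, sphere_subset_closedBall s.2⟩

/-- The `j`-fold unreduced suspension `Σ^j Y = (Y × D^j) ∪_{Y × S^{j-1}} (* × S^{j-1})`,
obtained from `(Y × D^j) ⊔ S^{j-1}` by gluing `(y, s)` to `s` for `s ∈ S^{j-1}`. -/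
def USp (j : ℕ) (Y : Type) [TopologicalSpace Y] : Type :=
  Quot (fun a b : (Y × (closedBall (0 : EuclideanSpace ℝ (Fin j)) 1 : Set _)) ⊕
      (sphere (0 : EuclideanSpace ℝ (Fin j)) 1 : Set _) =>
    ∃ (y : Y) (s : (sphere (0 : EuclideanSpace ℝ (Fin j)) 1 : Set _)),
      a = Sum.inl (y, sphereToDisk s) ∧ b = Sum.inr s)

instance (j : ℕ) (Y : Type) [TopologicalSpace Y] : TopologicalSpace (USp j Y) := by
  unfold USp; infer_instance

/-- The north pole of the unit sphere `S^{j-1} ⊆ ℝ^j`, for `j ≥ 1`. -/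
def northPole (j : ℕ) (h : 0 < j) : (sphere (0 : EuclideanSpace ℝ (Fin j)) 1 : Set _) :=
  ⟨EuclideanSpace.single (⟨0, h⟩ : Fin j) (1 : ℝ), by
    rw [mem_sphere_zero_iff_norm, EuclideanSpace.norm_single]; norm_num⟩

/-- The suspension point of the unreduced suspension (a point of `* × S^{j-1}`). -/
def suspPoint (j : ℕ) (h : 0 < j) (Y : Type) [TopologicalSpace Y] : USp j Y :=
  Quot.mk _ (Sum.inr (northPole j h))

/-- The configuration space of ordered `k`-tuples of pairwise distinct points of `M`. -/
def ConfigSpace (M : Type) [TopologicalSpace M] (k : ℕ) : Type :=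
  {x : Fin k → M // Function.Injective x}

instance (M : Type) [TopologicalSpace M] (k : ℕ) : TopologicalSpace (ConfigSpace M k) := by
  unfold ConfigSpace; infer_instance

/-- The fat diagonal in `M^k`: tuples with at least two equal entries. -/
def fatDiagonal (M : Type) (k : ℕ) : Set (Fin k → M) :=
  {x | ∃ i j : Fin k, i ≠ j ∧ x i = x j}

/-- The `j`-fold fiberwise suspension `Σ^j_X Y = (Y × D^j) ∪_{Y × S^{j-1}} (X × S^{j-1})`
of a space `Y` over `X` via `p : Y → X`. -/
def FibSusp (j : ℕ) {Y X : Type} [TopologicalSpace Y] [TopologicalSpace X] (p : C(Y, X)) :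
    Type :=
  Quot (fun a b : (Y × (closedBall (0 : EuclideanSpace ℝ (Fin j)) 1 : Set _)) ⊕
      (X × (sphere (0 : EuclideanSpace ℝ (Fin j)) 1 : Set _)) =>
    ∃ y s, a = Sum.inl (y, sphereToDisk s) ∧ b = Sum.inr (p y, s))

instance (j : ℕ) {Y X : Type} [TopologicalSpace Y] [TopologicalSpace X] (p : C(Y, X)) :
    TopologicalSpace (FibSusp j p) := by unfold FibSusp; infer_instance

/-- The structure map `X × S^{j-1} → Σ^j_X Y`. -/
def fibSuspIncl (j : ℕ) {Y X : Type} [TopologicalSpace Y] [TopologicalSpace X] (p : C(Y, X)) :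
    C(X × (sphere (0 : EuclideanSpace ℝ (Fin j)) 1 : Set _), FibSusp j p) :=
  ⟨fun a => Quot.mk _ (Sum.inr a), continuous_quot_mk.comp continuous_inr⟩

/-- The structure map `Σ^j_X Y → X`. -/
def fibSuspProj (j : ℕ) {Y X : Type} [TopologicalSpace Y] [TopologicalSpace X] (p : C(Y, X)) :
    C(FibSusp j p, X) :=
  ⟨Quot.lift (Sum.elim (fun a => p a.1) Prod.fst)
      (by rintro a b ⟨y, s, rfl, rfl⟩; rfl),
    continuous_quot_lift _ ((p.continuous.comp continuous_fst).sumElim continuous_fst)⟩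

/-- The complement of the `j`-fold decompression: `(M × D^j) − int(N × D^j_{1/2})`. -/
def DecompComplement (j : ℕ) (M : Type) [TopologicalSpace M] (N : Set M) : Type :=
  {p : M × EuclideanSpace ℝ (Fin j) //
    ‖p.2‖ ≤ 1 ∧ ¬(p.1 ∈ interior N ∧ ‖p.2‖ < 1 / 2)}

instance (j : ℕ) (M : Type) [TopologicalSpace M] (N : Set M) :
    TopologicalSpace (DecompComplement j M N) := by unfold DecompComplement; infer_instance

/-! ### Auxiliary material for Statement 11 -/

namespace Stmt11Aux

open Metric

/-- Radial scaling factor: at time `t`, a vector of norm `r` is scaled by `scal t r`. -/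
def scal (t r : ℝ) : ℝ := (1 - t) + t * (max 1 (2 * r))⁻¹

lemma max_pos' (r : ℝ) : 0 < max 1 (2 * r) := lt_of_lt_of_le one_pos (le_max_left _ _)

lemma key (r : ℝ) (hr : 0 ≤ r) : r * (max 1 (2 * r))⁻¹ ≤ 1 / 2 := by
  have hm := max_pos' r
  have h2 : 2 * r ≤ max 1 (2 * r) := le_max_right _ _
  calc r * (max 1 (2 * r))⁻¹
      ≤ (1 / 2 * max 1 (2 * r)) * (max 1 (2 * r))⁻¹ := by
        apply mul_le_mul_of_nonneg_right _ (inv_nonneg.mpr hm.le); linarith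
    _ = 1 / 2 := by field_simp

lemma scal_nonneg {t : ℝ} (r : ℝ) (ht0 : 0 ≤ t) (ht1 : t ≤ 1) : 0 ≤ scal t r := by
  have := (inv_nonneg.mpr (max_pos' r).le)
  have : 0 ≤ t * (max 1 (2 * r))⁻¹ := mul_nonneg ht0 this
  unfold scal; linarith

lemma scal_eq_one {t r : ℝ} (hr : r ≤ 1 / 2) : scal t r = 1 := by
  unfold scal
  rw [max_eq_left (by linarith : 2 * r ≤ 1)]
  simp

lemma scal_mul_le_one {t r : ℝ} (ht0 : 0 ≤ t) (ht1 : t ≤ 1) (hr0 : 0 ≤ r) (hr1 : r ≤ 1) :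
    scal t r * r ≤ 1 := by
  by_cases h : r ≤ 1 / 2
  · rw [scal_eq_one h]; linarith
  · have hmax : max 1 (2 * r) = 2 * r := max_eq_right (by linarith)
    have hrpos : (0:ℝ) < r := by linarith
    have e : scal t r * r = (1 - t) * r + t / 2 := by
      unfold scal; rw [hmax]; field_simp
    rw [e]
    nlinarith [mul_le_mul_of_nonneg_left hr1 (by linarith : (0:ℝ) ≤ 1 - t)]

lemma half_le_scal_mul {t r : ℝ} (ht0 : 0 ≤ t) (ht1 : t ≤ 1) (hr : 1 / 2 ≤ r) :
    1 / 2 ≤ scal t r * r := by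
  have hmax : max 1 (2 * r) = 2 * r := max_eq_right (by linarith)
  have hrpos : (0:ℝ) < r := by linarith
  have e : scal t r * r = (1 - t) * r + t / 2 := by
    unfold scal; rw [hmax]; field_simp
  rw [e]
  nlinarith [mul_le_mul_of_nonneg_left hr (by linarith : (0:ℝ) ≤ 1 - t)]

lemma scal_one_mul_le_half {r : ℝ} (hr : 0 ≤ r) : scal 1 r * r ≤ 1 / 2 := by
  have : scal 1 r = (max 1 (2 * r))⁻¹ := by unfold scal; ring
  rw [this, mul_comm]
  exact key r hr

section Geometry

variable (j : ℕ) (M : Type) [TopologicalSpace M] (N : Set M)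

/-- Norm of the scaled vector. -/
lemma norm_scal_smul {t : ℝ} (ht0 : 0 ≤ t) (ht1 : t ≤ 1) (v : EuclideanSpace ℝ (Fin j)) :
    ‖scal t ‖v‖ • v‖ = scal t ‖v‖ * ‖v‖ := by
  rw [norm_smul, Real.norm_eq_abs, abs_of_nonneg (scal_nonneg _ ht0 ht1)]

/-- The inner copy of the fiberwise suspension inside the decompression complement. -/
def Sset : Set (DecompComplement j M N) := {x | ‖x.1.2‖ ≤ 1 / 2}

/-- The radial strong deformation retraction. -/
def bigH : C(DecompComplement j M N × I, DecompComplement j M N) := by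
  refine ⟨fun p => ⟨(p.1.1.1, scal (p.2 : ℝ) ‖p.1.1.2‖ • p.1.1.2), ?_, ?_⟩, ?_⟩
  · rw [norm_scal_smul j p.2.2.1 p.2.2.2]
    exact scal_mul_le_one p.2.2.1 p.2.2.2 (norm_nonneg _) p.1.2.1
  · rintro ⟨hmN, hlt⟩
    have hr : 1 / 2 ≤ ‖p.1.1.2‖ := by
      by_contra h
      exact p.1.2.2 ⟨hmN, lt_of_not_ge h⟩
    rw [norm_scal_smul j p.2.2.1 p.2.2.2] at hlt
    have := half_le_scal_mul p.2.2.1 p.2.2.2 hr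
    linarith
  · apply Continuous.subtype_mk
    have hval : Continuous fun p : DecompComplement j M N × I => p.1.1 :=
      continuous_subtype_val.comp continuous_fst
    have hm : Continuous fun p : DecompComplement j M N × I => p.1.1.1 := hval.fst
    have hv : Continuous fun p : DecompComplement j M N × I => p.1.1.2 := hval.snd
    have ht : Continuous fun p : DecompComplement j M N × I => (p.2 : ℝ) :=
      continuous_subtype_val.comp continuous_snd
    have hr : Continuous fun p : DecompComplement j M N × I => ‖p.1.1.2‖ := hv.norm
    have hinv : Continuous fun p : DecompComplement j M N × I =>
        (max 1 (2 * ‖p.1.1.2‖))⁻¹ :=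
      (continuous_const.max (continuous_const.mul hr)).inv₀ (fun p => (max_pos' _).ne')
    have hscal : Continuous fun p : DecompComplement j M N × I =>
        scal (p.2 : ℝ) ‖p.1.1.2‖ := by
      unfold scal
      exact (continuous_const.sub ht).add (ht.mul hinv)
    exact hm.prodMk (hscal.smul hv)

lemma bigH_zero (x : DecompComplement j M N) : bigH j M N (x, 0) = x := by
  apply Subtype.ext
  show (x.1.1, scal ((0:I):ℝ) ‖x.1.2‖ • x.1.2) = x.1
  have h0 : ((0:I):ℝ) = 0 := rfl
  rw [h0, show scal 0 ‖x.1.2‖ = 1 from by unfold scal; simp, one_smul]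

lemma bigH_fix (x : DecompComplement j M N) (hx : x ∈ Sset j M N) (t : I) :
    bigH j M N (x, t) = x := by
  apply Subtype.ext
  show (x.1.1, scal (t:ℝ) ‖x.1.2‖ • x.1.2) = x.1
  rw [scal_eq_one hx, one_smul]

lemma bigH_one_mem (x : DecompComplement j M N) : bigH j M N (x, 1) ∈ Sset j M N := by
  show ‖scal ((1:I):ℝ) ‖x.1.2‖ • x.1.2‖ ≤ 1 / 2
  have h1 : ((1:I):ℝ) = 1 := rfl
  rw [h1, norm_scal_smul j zero_le_one le_rfl]
  exact scal_one_mul_le_half (norm_nonneg _)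

end Geometry

section Homeo

variable (j : ℕ) (M : Type) [TopologicalSpace M] (N C : Set M)
  (hsub : ∀ m ∈ C, m ∉ interior N) (hsub' : ∀ m : M, m ∉ interior N → m ∈ C)

/-- Left part of the map from the fiberwise suspension to `Sset`. -/
def fL : ↥C × (closedBall (0 : EuclideanSpace ℝ (Fin j)) 1 : Set _) → ↥(Sset j M N) :=
  fun a => ⟨⟨(a.1.1, (1/2 : ℝ) • a.2.1), by
      rw [norm_smul, Real.norm_eq_abs]
      have := mem_closedBall_zero_iff.mp a.2.2
      constructor
      · rw [abs_of_nonneg (by norm_num : (0:ℝ) ≤ 1/2)]; nlinarith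
      · rintro ⟨hm, -⟩; exact hsub a.1.1 a.1.2 hm⟩, by
    show ‖(1/2 : ℝ) • a.2.1‖ ≤ 1/2
    rw [norm_smul, Real.norm_eq_abs, abs_of_nonneg (by norm_num : (0:ℝ) ≤ 1/2)]
    have := mem_closedBall_zero_iff.mp a.2.2
    nlinarith⟩

/-- Right part of the map from the fiberwise suspension to `Sset`. -/
def fR : M × (sphere (0 : EuclideanSpace ℝ (Fin j)) 1 : Set _) → ↥(Sset j M N) :=
  fun b => ⟨⟨(b.1, (1/2 : ℝ) • b.2.1), by
      have hs := mem_sphere_zero_iff_norm.mp b.2.2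
      have hn : ‖(1/2 : ℝ) • b.2.1‖ = 1/2 := by
        rw [norm_smul, Real.norm_eq_abs, abs_of_nonneg (by norm_num : (0:ℝ) ≤ 1/2), hs]
        ring
      constructor
      · rw [hn]; norm_num
      · rintro ⟨-, hlt⟩; rw [hn] at hlt; exact absurd hlt (lt_irrefl _)⟩, by
    show ‖(1/2 : ℝ) • b.2.1‖ ≤ 1/2
    have hs := mem_sphere_zero_iff_norm.mp b.2.2
    rw [norm_smul, Real.norm_eq_abs, abs_of_nonneg (by norm_num : (0:ℝ) ≤ 1/2), hs]
    norm_num⟩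

lemma fwd_resp (a b) (h : ∃ (y : ↥C) (s : (sphere (0 : EuclideanSpace ℝ (Fin j)) 1 : Set _)),
    a = Sum.inl (y, sphereToDisk s) ∧
    b = Sum.inr ((⟨Subtype.val, continuous_subtype_val⟩ : C(↥C, M)) y, s)) :
    Sum.elim (fL j M N C hsub) (fR j M N) a = Sum.elim (fL j M N C hsub) (fR j M N) b := by
  obtain ⟨y, s, rfl, rfl⟩ := h
  apply Subtype.ext
  apply Subtype.ext
  rfl

/-- The map from the fiberwise suspension onto `Sset`. -/
def toSset : FibSusp j (⟨Subtype.val, continuous_subtype_val⟩ : C(↥C, M)) → ↥(Sset j M N) :=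
  Quot.lift (Sum.elim (fL j M N C hsub) (fR j M N)) (fwd_resp j M N C hsub)

lemma toSset_continuous : Continuous (toSset j M N C hsub) := by
  apply continuous_quot_lift
  apply Continuous.sumElim
  · apply Continuous.subtype_mk
    apply Continuous.subtype_mk
    exact (continuous_subtype_val.comp continuous_fst).prodMk
      (by fun_prop)
  · apply Continuous.subtype_mk
    apply Continuous.subtype_mk
    exact continuous_fst.prodMk
      (by fun_prop)

lemma half_smul_inj {n : ℕ} {v w : EuclideanSpace ℝ (Fin n)}
    (h : (1/2 : ℝ) • v = (1/2 : ℝ) • w) : v = w :=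
  smul_right_injective _ (by norm_num : (1/2 : ℝ) ≠ 0) h

lemma toSset_injective : Function.Injective (toSset j M N C hsub) := by
  intro a b
  induction a using Quot.ind with | _ a =>
  induction b using Quot.ind with | _ b =>
  intro h
  have h' : Sum.elim (fL j M N C hsub) (fR j M N) a
      = Sum.elim (fL j M N C hsub) (fR j M N) b := h
  cases a with
  | inl a =>
    cases b with
    | inl b =>
      have h2 := congrArg (fun z => (z : ↥(Sset j M N)).1.1) h'
      simp only [Sum.elim_inl, fL] at h2
      have h3 : a.1.1 = b.1.1 := congrArg Prod.fst h2
      have h4 : a.2.1 = b.2.1 := half_smul_inj (congrArg Prod.snd h2)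
      have : a = b := Prod.ext (Subtype.ext h3) (Subtype.ext h4)
      rw [this]
    | inr b =>
      have h2 := congrArg (fun z => (z : ↥(Sset j M N)).1.1) h'
      simp only [Sum.elim_inl, Sum.elim_inr, fL, fR] at h2
      have h3 : a.1.1 = b.1 := congrArg Prod.fst h2
      have h4 : a.2.1 = b.2.1 := half_smul_inj (congrArg Prod.snd h2)
      apply Quot.sound
      refine ⟨a.1, b.2, ?_, ?_⟩
      · have : a.2 = sphereToDisk b.2 := Subtype.ext h4
        rw [← this]
      · have : b = (a.1.1, b.2) := Prod.ext h3.symm rfl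
        rw [this]
        rfl
  | inr a =>
    cases b with
    | inl b =>
      have h2 := congrArg (fun z => (z : ↥(Sset j M N)).1.1) h'
      simp only [Sum.elim_inl, Sum.elim_inr, fL, fR] at h2
      have h3 : a.1 = b.1.1 := congrArg Prod.fst h2
      have h4 : a.2.1 = b.2.1 := half_smul_inj (congrArg Prod.snd h2)
      refine (Quot.sound ?_).symm
      refine ⟨b.1, a.2, ?_, ?_⟩
      · have : b.2 = sphereToDisk a.2 := Subtype.ext h4.symm
        rw [← this]
      · have : a = (b.1.1, a.2) := Prod.ext h3 rfl
        rw [this]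
        rfl
    | inr b =>
      have h2 := congrArg (fun z => (z : ↥(Sset j M N)).1.1) h'
      simp only [Sum.elim_inr, fR] at h2
      have h3 : a.1 = b.1 := (Prod.ext_iff.mp h2).1
      have h4 : a.2.1 = b.2.1 := half_smul_inj (Prod.ext_iff.mp h2).2
      have : a = b := Prod.ext h3 (Subtype.ext h4)
      rw [this]

include hsub' in
lemma toSset_surjective : Function.Surjective (toSset j M N C hsub) := by
  rintro ⟨⟨⟨m, v⟩, hmem⟩, hS⟩
  have hS' : ‖v‖ ≤ 1/2 := hS
  by_cases hmN : m ∈ interior N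
  · have hge : ¬ ‖v‖ < 1/2 := fun h => hmem.2 ⟨hmN, h⟩
    have heq : ‖v‖ = 1/2 := le_antisymm hS' (not_lt.mp hge)
    refine ⟨Quot.mk _ (Sum.inr (m, ⟨(2:ℝ) • v, ?_⟩)), ?_⟩
    · rw [mem_sphere_zero_iff_norm, norm_smul, Real.norm_eq_abs,
        abs_of_nonneg (by norm_num : (0:ℝ) ≤ 2), heq]
      norm_num
    · apply Subtype.ext
      apply Subtype.ext
      show (m, (1/2 : ℝ) • ((2:ℝ) • v)) = (m, v)
      rw [smul_smul]
      norm_num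
  · have hmC : m ∈ C := hsub' m hmN
    refine ⟨Quot.mk _ (Sum.inl (⟨m, hmC⟩, ⟨(2:ℝ) • v, ?_⟩)), ?_⟩
    · rw [mem_closedBall_zero_iff, norm_smul, Real.norm_eq_abs,
        abs_of_nonneg (by norm_num : (0:ℝ) ≤ 2)]
      linarith
    · apply Subtype.ext
      apply Subtype.ext
      show (m, (1/2 : ℝ) • ((2:ℝ) • v)) = (m, v)
      rw [smul_smul]
      norm_num

end Homeo

end Stmt11Aux


/-- For a closed manifold `M`, a compact codimension-zero piece `N` with
complement `C = cl(M − N)`, the complement of the `j`-fold decompression deformation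
retracts onto a subspace homeomorphic to the fiberwise suspension `Σ^j_M C`; in
particular it is homotopy equivalent to `Σ^j_M C`. -/
theorem decompression_complement_retracts_to_fibSusp (d : ℕ) (M : Type)
    [TopologicalSpace M] [T2Space M] [CompactSpace M]
    [ChartedSpace (EuclideanSpace ℝ (Fin d)) M]
    (j : ℕ) (hj : 1 ≤ j) (N C : Set M) (hN : IsCompact N)
    (hC : C = closure Nᶜ) (hcompl : Set.univ \ interior N = C) :
    ∃ S' : Set (DecompComplement j M N),
      (∃ H : C(DecompComplement j M N × I, DecompComplement j M N),
        (∀ x, H (x, 0) = x) ∧ (∀ x, H (x, 1) ∈ S') ∧ ∀ x ∈ S', ∀ t, H (x, t) = x) ∧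
      Nonempty (↥S' ≃ₜ
        FibSusp j (⟨Subtype.val, continuous_subtype_val⟩ : C(↥C, M))) ∧
      Nonempty (ContinuousMap.HomotopyEquiv (DecompComplement j M N)
        (FibSusp j (⟨Subtype.val, continuous_subtype_val⟩ : C(↥C, M)))) := by
  classical
  open Stmt11Aux in
  have hsub : ∀ m ∈ C, m ∉ interior N := by
    intro m hm
    rw [← hcompl] at hm
    exact hm.2
  have hsub' : ∀ m : M, m ∉ interior N → m ∈ C := by
    intro m hm
    rw [← hcompl]
    exact ⟨Set.mem_univ m, hm⟩
  -- compactness instances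
  haveI : CompactSpace ↥C := isCompact_iff_compactSpace.mp
    (IsClosed.isCompact (by
      rw [← hcompl, ← Set.compl_eq_univ_diff]
      exact isOpen_interior.isClosed_compl))
  haveI : T2Space (DecompComplement j M N) := by unfold DecompComplement; infer_instance
  haveI : CompactSpace ↥(closedBall (0 : EuclideanSpace ℝ (Fin j)) 1 : Set _) :=
    isCompact_iff_compactSpace.mp (isCompact_closedBall _ _)
  haveI : CompactSpace ↥(sphere (0 : EuclideanSpace ℝ (Fin j)) 1 : Set _) :=
    isCompact_iff_compactSpace.mp (isCompact_sphere _ _)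
  haveI : CompactSpace (FibSusp j (⟨Subtype.val, continuous_subtype_val⟩ : C(↥C, M))) := by
    unfold FibSusp
    constructor
    rw [← Set.range_quot_mk]
    exact isCompact_range continuous_quot_mk
  -- the homeomorphism
  let e : FibSusp j (⟨Subtype.val, continuous_subtype_val⟩ : C(↥C, M)) ≃ ↥(Sset j M N) :=
    Equiv.ofBijective (toSset j M N C hsub)
      ⟨toSset_injective j M N C hsub, toSset_surjective j M N C hsub hsub'⟩
  have he : Continuous e := toSset_continuous j M N C hsub
  let homeo : FibSusp j (⟨Subtype.val, continuous_subtype_val⟩ : C(↥C, M)) ≃ₜ ↥(Sset j M N) :=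
    he.homeoOfEquivCompactToT2
  -- the retraction as a map to the subspace
  let rr : C(DecompComplement j M N, ↥(Sset j M N)) :=
    ⟨fun x => ⟨bigH j M N (x, 1), bigH_one_mem j M N x⟩, by
      apply Continuous.subtype_mk
      exact (bigH j M N).continuous.comp (continuous_id.prodMk continuous_const)⟩
  let ι : C(↥(Sset j M N), DecompComplement j M N) := ⟨Subtype.val, continuous_subtype_val⟩
  have hretr : ι.comp rr = ⟨fun x => bigH j M N (x, 1), by
      exact (bigH j M N).continuous.comp (continuous_id.prodMk continuous_const)⟩ := rfl
  -- homotopy equivalence with the subspace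
  let hequiv : ContinuousMap.HomotopyEquiv (DecompComplement j M N) ↥(Sset j M N) :=
    { toFun := rr
      invFun := ι
      left_inv := by
        refine ⟨⟨⟨fun p => bigH j M N (p.2, unitInterval.symm p.1), ?_⟩, ?_, ?_⟩⟩
        · exact (bigH j M N).continuous.comp
            (continuous_snd.prodMk (unitInterval.continuous_symm.comp continuous_fst))
        · intro x
          show bigH j M N (x, unitInterval.symm 0) = (ι.comp rr) x
          rw [unitInterval.symm_zero]
          rfl
        · intro x
          show bigH j M N (x, unitInterval.symm 1) = x
          rw [unitInterval.symm_one]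
          exact bigH_zero j M N x
      right_inv := by
        have : rr.comp ι = ContinuousMap.id _ := by
          apply ContinuousMap.ext
          intro s
          apply Subtype.ext
          exact bigH_fix j M N s.1 s.2 1
        rw [this] }
  refine ⟨Sset j M N, ⟨bigH j M N, bigH_zero j M N, bigH_one_mem j M N,
    fun x hx t => bigH_fix j M N x hx t⟩, ⟨homeo.symm⟩, ⟨hequiv.trans homeo.symm.toHomotopyEquiv⟩⟩
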